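/- Let A be a finite-dimensional formally real Jordan algebra with an associative inner product ⟨·,·⟩. Then the Jordan curvature is non-positive: for all linearly independent X, Y in A, ⟨R(X,Y)X, Y⟩ ≤ 0, where R(X,Y)Z = ∇_{XY}Z − ∇_X∇_Y Z − ∇_Y∇_X Z and ∇_X Y = ½XY. -/

import Mathlib

open RealInnerProductSpace Polynomial

section JordanAux

set_option linter.unusedSectionVars false

variable {V : Type*} [NormedAddCommGroup V] [InnerProductSpace ℝ V] [FiniteDimensional ℝ V]

/-- powers of `x` in the Jordan algebra -/
def jpow (mul : V →ₗ[ℝ] V →ₗ[ℝ] V) (E x : V) : ℕ → V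
  | 0 => E
  | n+1 => mul x (jpow mul E x n)

variable (mul : V →ₗ[ℝ] V →ₗ[ℝ] V)

theorem lin1' (comm : ∀ X Y : V, mul X Y = mul Y X)
    (jordan : ∀ X Y : V, mul X (mul (mul X X) Y) = mul (mul X X) (mul X Y))
    (x z y : V) :
    mul z (mul (mul x x) y) + (2:ℝ) • mul x (mul (mul x z) y)
      = mul (mul x x) (mul z y) + (2:ℝ) • mul (mul x z) (mul x y) := by
  have h₁ := jordan (x + z) y
  have h₂ := jordan (x - z) y
  have h₃ := jordan z y
  simp only [map_add, map_sub, LinearMap.add_apply, LinearMap.sub_apply] at h₁ h₂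
  rw [comm z x] at h₁ h₂
  linear_combination (norm := module) (1/2 : ℝ) • h₁ - (1/2 : ℝ) • h₂ - h₃

theorem jpow_sq (comm : ∀ X Y : V, mul X Y = mul Y X)
    (jordan : ∀ X Y : V, mul X (mul (mul X X) Y) = mul (mul X X) (mul X Y))
    (E : V) (hE : ∀ X : V, mul E X = X) (x : V) :
    ∀ k, mul (mul x x) (jpow mul E x k) = jpow mul E x (k+2)
  | 0 => by
      show mul (mul x x) E = jpow mul E x 2
      rw [comm _ E, hE, show jpow mul E x 2 = mul x (mul x E) from rfl, comm x E, hE]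
  | k+1 => by
      show mul (mul x x) (mul x (jpow mul E x k)) = _
      rw [← jordan, jpow_sq comm jordan E hE x k]; rfl

theorem Lexp (comm : ∀ X Y : V, mul X Y = mul Y X)
    (jordan : ∀ X Y : V, mul X (mul (mul X X) Y) = mul (mul X X) (mul X Y))
    (E : V) (hE : ∀ X : V, mul E X = X) (x : V) (k : ℕ) (u : V) :
    mul (jpow mul E x (k+2)) u
      = mul (mul x x) (mul (jpow mul E x k) u)
        + (2:ℝ) • mul (jpow mul E x (k+1)) (mul x u)
        - (2:ℝ) • mul x (mul (jpow mul E x k) (mul x u)) := by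
  have h := lin1' mul comm jordan x u (jpow mul E x k)
  rw [jpow_sq mul comm jordan E hE] at h
  rw [comm u (jpow mul E x (k+2))] at h
  rw [comm u (jpow mul E x k)] at h
  rw [comm (mul x u) (jpow mul E x k)] at h
  rw [show mul (mul x u) (mul x (jpow mul E x k)) = mul (jpow mul E x (k+1)) (mul x u) from comm _ _] at h
  linear_combination (norm := module) h

theorem Dcomm (comm : ∀ X Y : V, mul X Y = mul Y X)
    (jordan : ∀ X Y : V, mul X (mul (mul X X) Y) = mul (mul X X) (mul X Y))
    (E : V) (hE : ∀ X : V, mul E X = X) (x : V) :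
    ∀ n : ℕ, (∀ u : V, mul x (mul (jpow mul E x n) u) = mul (jpow mul E x n) (mul x u))
      ∧ (∀ u : V, mul (mul x x) (mul (jpow mul E x n) u)
          = mul (jpow mul E x n) (mul (mul x x) u)) := by
  have J1 : jpow mul E x 1 = x := by
    show mul x E = x
    rw [comm x E, hE]
  intro n
  induction n using Nat.strong_induction_on with
  | _ n ih =>
    match n with
    | 0 =>
      constructor <;> intro u <;> · show _ = _ ; rw [show jpow mul E x 0 = E from rfl, hE, hE]
    | 1 =>
      rw [J1]
      exact ⟨fun u => rfl, fun u => (jordan x u).symm⟩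
    | (k+2) =>
      obtain ⟨ih1k, ih2k⟩ := ih k (by omega)
      obtain ⟨ih1k1, ih2k1⟩ := ih (k+1) (by omega)
      constructor <;> intro u
      · rw [Lexp mul comm jordan E hE x k u, Lexp mul comm jordan E hE x k (mul x u)]
        rw [← ih1k u, ← jordan, ← ih1k1 (mul x u), ← ih1k (mul x u)]
        simp only [map_add, map_smul, map_sub]
        rw [ih1k u]
      · rw [Lexp mul comm jordan E hE x k u, Lexp mul comm jordan E hE x k (mul (mul x x) u)]
        simp only [map_add, map_smul, map_sub]
        rw [← ih2k u, jordan x u, ← ih2k1 (mul x u), ← ih2k (mul x u),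
          jordan x (mul (jpow mul E x k) (mul x u))]

theorem jpow_mul (comm : ∀ X Y : V, mul X Y = mul Y X)
    (jordan : ∀ X Y : V, mul X (mul (mul X X) Y) = mul (mul X X) (mul X Y))
    (E : V) (hE : ∀ X : V, mul E X = X) (x : V) :
    ∀ m n : ℕ, mul (jpow mul E x m) (jpow mul E x n) = jpow mul E x (m + n)
  | 0, n => by rw [show (0:ℕ)+n = n from Nat.zero_add n]; exact hE _
  | (m+1), n => by
    show mul (mul x (jpow mul E x m)) (jpow mul E x n) = _
    rw [comm, ← (Dcomm mul comm jordan E hE x n).1 (jpow mul E x m), comm (jpow mul E x n) (jpow mul E x m),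
      jpow_mul comm jordan E hE x m n, show m+1+n = (m+n)+1 from by omega]
    rfl

theorem symPSD (T : V →ₗ[ℝ] V) (hT : T.IsSymmetric)
    (h : ∀ (μ : ℝ) (v : V), v ≠ 0 → T v = μ • v → 0 ≤ μ) :
    ∀ v : V, 0 ≤ ⟪T v, v⟫ := by
  intro v
  set b := hT.eigenvectorBasis rfl with hb
  rw [← b.sum_inner_mul_inner (T v) v]
  apply Finset.sum_nonneg
  intro i _
  have hev : T (b i) = hT.eigenvalues rfl i • b i := hT.apply_eigenvectorBasis rfl i
  have hne : b i ≠ 0 := b.orthonormal.ne_zero i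
  have hpos : 0 ≤ hT.eigenvalues rfl i := h _ _ hne hev
  have : ⟪T v, b i⟫ = hT.eigenvalues rfl i * ⟪b i, v⟫ := by
    rw [hT v (b i), hev, real_inner_smul_right, real_inner_comm]
  rw [this, mul_assoc]
  exact mul_nonneg hpos (mul_self_nonneg _)

theorem root_prod_dvd (S : Finset ℝ) : ∀ (f : Polynomial ℝ), (∀ α ∈ S, f.eval α = 0) →
    (∏ α ∈ S, (X - C α)) ∣ f := by
  induction S using Finset.induction_on with
  | empty => intro f _; simp
  | @insert a s ha ih =>
    intro f hf
    have h1 : (X - C a) ∣ f := dvd_iff_isRoot.mpr (hf a (Finset.mem_insert_self a s))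
    obtain ⟨g, hg⟩ := h1
    have h2 : ∀ β ∈ s, g.eval β = 0 := by
      intro β hβ
      by_cases hba : β = a
      · subst hba; exact absurd hβ ha
      · have := hf β (Finset.mem_insert_of_mem hβ)
        rw [hg] at this
        simpa [sub_eq_zero, hba] using this
    rw [Finset.prod_insert ha, hg]
    exact mul_dvd_mul_left _ (ih g h2)

theorem annihilate (T : V →ₗ[ℝ] V) (hT : T.IsSymmetric) :
    ∃ S : Finset ℝ, (∀ f : Polynomial ℝ, (∀ α ∈ S, f.eval α = 0) → aeval T f = 0)
      ∧ ∀ (μ : ℝ) (v : V), v ≠ 0 → T v = μ • v → μ ∈ S := by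
  set b := hT.eigenvectorBasis rfl with hb
  set ev := hT.eigenvalues (rfl : Module.finrank ℝ V = Module.finrank ℝ V) with hev
  refine ⟨Finset.image ev Finset.univ, ?_, ?_⟩
  · intro f hf
    have hq : aeval T (∏ α ∈ Finset.image ev Finset.univ, (X - C α)) = 0 := by
      apply b.toBasis.ext
      intro i
      have hmem : ev i ∈ Finset.image ev Finset.univ := Finset.mem_image_of_mem _ (Finset.mem_univ i)
      rw [← Finset.prod_erase_mul _ _ hmem, map_mul]
      have : (aeval T (X - C (ev i))) (b.toBasis i) = 0 := by
        simp only [map_sub, aeval_X, aeval_C, LinearMap.sub_apply, OrthonormalBasis.coe_toBasis]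
        rw [hT.apply_eigenvectorBasis]
        simp [Module.algebraMap_end_apply]
        exact sub_self _
      rw [Module.End.mul_apply, this, map_zero, LinearMap.zero_apply]
    obtain ⟨g, hg⟩ := root_prod_dvd _ f hf
    rw [hg, map_mul, hq, zero_mul]
  · intro μ v hv hTv
    have hvr : b.repr v ≠ 0 := by
      intro h0
      exact hv (by simpa using congrArg b.repr.symm h0)
    have : ∃ i, b.repr v i ≠ 0 := by
      by_contra hc
      push_neg at hc
      exact hvr (by ext j; simpa using hc j)
    obtain ⟨i, hi⟩ := this
    have h1 : b.repr (T v) i = ev i * b.repr v i := hT.eigenvectorBasis_apply_self_apply rfl v i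
    have h2 : b.repr (T v) i = μ * b.repr v i := by
      rw [hTv]
      simp
    have : μ = ev i := by
      have := h1.symm.trans h2
      exact (mul_right_cancel₀ hi this).symm
    rw [this]
    exact Finset.mem_image_of_mem _ (Finset.mem_univ i)

theorem pow_apply_E (E x : V) :
    ∀ k : ℕ, ((mul x)^k) E = jpow mul E x k
  | 0 => rfl
  | k+1 => by
    rw [pow_succ', Module.End.mul_apply, pow_apply_E E x k]; rfl

theorem jeval_mul (comm : ∀ X Y : V, mul X Y = mul Y X)
    (jordan : ∀ X Y : V, mul X (mul (mul X X) Y) = mul (mul X X) (mul X Y))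
    (E : V) (hE : ∀ X : V, mul E X = X) (x : V) (p q : Polynomial ℝ) :
    mul ((aeval (mul x) p) E) ((aeval (mul x) q) E) = (aeval (mul x) (p * q)) E := by
  induction p using Polynomial.induction_on' with
  | add f g hf hg =>
    rw [map_add, add_mul, map_add, LinearMap.add_apply, LinearMap.add_apply, map_add,
      LinearMap.add_apply, ← hf, ← hg]
  | monomial m a =>
    induction q using Polynomial.induction_on' with
    | add f g hf hg =>
      rw [map_add, mul_add, map_add, LinearMap.add_apply, LinearMap.add_apply, map_add, ← hf, ← hg]
    | monomial n b =>
      rw [monomial_mul_monomial]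
      simp only [aeval_monomial, Module.algebraMap_end_eq_smul_id, Module.End.mul_apply,
        LinearMap.smul_apply, LinearMap.id_apply, pow_apply_E]
      rw [map_smul mul a (jpow mul E x m), LinearMap.smul_apply,
        map_smul (mul (jpow mul E x m)) b (jpow mul E x n), smul_smul,
        jpow_mul mul comm jordan E hE x m n]

theorem idem_eig (comm : ∀ X Y : V, mul X Y = mul Y X)
    (jordan : ∀ X Y : V, mul X (mul (mul X X) Y) = mul (mul X X) (mul X Y))
    (assoc : ∀ X Y Z : V, ⟪mul X Y, Z⟫ = ⟪X, mul Y Z⟫)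
    (c : V) (hc : mul c c = c) (μ : ℝ) (v : V) (hv : v ≠ 0) (hμ : mul c v = μ • v) :
    0 ≤ μ := by
  by_cases h2 : μ = 1/2
  · rw [h2]; norm_num
  · have h := lin1' mul comm jordan c v v
    rw [hc, hμ] at h
    have hcv : mul c (mul v v) = μ • mul v v := by
      have h3 : (2*μ - 1) • mul c (mul v v) = (2*μ - 1) • (μ • mul v v) := by
        simp only [map_smul, LinearMap.smul_apply] at h
        rw [smul_smul]
        linear_combination (norm := module) h
      have h4 : (2*μ - 1) ≠ 0 := by
        intro h0; apply h2; linarith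
      exact smul_right_injective V h4 h3
    have e1 : ⟪c, mul v v⟫ = μ * ⟪v, v⟫ := by
      rw [← assoc c v v, hμ, real_inner_smul_left]
    have e2 : ⟪c, mul v v⟫ = μ * ⟪c, mul v v⟫ := by
      conv_lhs => rw [← hc]
      rw [assoc c c (mul v v), hcv, real_inner_smul_right]
    have hvv : (0:ℝ) < ⟪v, v⟫ := by
      rw [real_inner_self_eq_norm_sq]
      exact pow_pos (norm_pos_iff.mpr hv) 2
    have ht0 : ⟪c, mul v v⟫ * (1 - μ) = 0 := by
      have := e2
      ring_nf
      ring_nf at this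
      linarith
    rcases mul_eq_zero.mp ht0 with h | h
    · have : μ * ⟪v, v⟫ = 0 := by rw [← e1, h]
      rcases mul_eq_zero.mp this with h' | h'
      · exact le_of_eq h'.symm
      · exact absurd h' (ne_of_gt hvv)
    · have : μ = 1 := by linarith
      rw [this]; norm_num

theorem PSDsq (comm : ∀ X Y : V, mul X Y = mul Y X)
    (jordan : ∀ X Y : V, mul X (mul (mul X X) Y) = mul (mul X X) (mul X Y))
    (E : V) (hE : ∀ X : V, mul E X = X)
    (assoc : ∀ X Y Z : V, ⟪mul X Y, Z⟫ = ⟪X, mul Y Z⟫)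
    (a u : V) : 0 ≤ ⟪mul (mul a a) u, u⟫ := by
  have Lsym : ∀ w : V, (mul w).IsSymmetric := by
    intro w v z
    rw [comm w v, assoc]
  obtain ⟨S, hS0, _⟩ := annihilate (mul a) (Lsym a)
  set c : ℝ → V := fun α => (aeval (mul a) (Lagrange.basis S id α)) E with hcdef
  have hinj : Set.InjOn (id : ℝ → ℝ) ↑S := Function.injective_id.injOn
  have hidem : ∀ α ∈ S, mul (c α) (c α) = c α := by
    intro α hα
    rw [hcdef]
    simp only
    rw [jeval_mul mul comm jordan E hE]
    have hz : aeval (mul a) (Lagrange.basis S id α * Lagrange.basis S id α - Lagrange.basis S id α) = 0 := by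
      apply hS0
      intro β hβ
      by_cases hab : α = β
      · subst hab
        have hb1 : eval α (Lagrange.basis S id α) = 1 :=
          Lagrange.eval_basis_self (v := id) hinj hα
        simp [hb1]
      · have hb0 : eval β (Lagrange.basis S id α) = 0 :=
          Lagrange.eval_basis_of_ne (v := id) hab hβ
        simp [hb0]
    rw [map_sub] at hz
    have := sub_eq_zero.mp hz
    rw [this]
  have hdecomp : mul a a = ∑ α ∈ S, (α^2) • c α := by
    have hz : aeval (mul a) (X^2 - ∑ α ∈ S, C (α^2) * Lagrange.basis S id α) = 0 := by
      apply hS0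
      intro β hβ
      rw [eval_sub, eval_pow, eval_X, eval_finset_sum]
      rw [Finset.sum_eq_single β]
      · have hb1 : eval β (Lagrange.basis S id β) = 1 := by
          simpa using Lagrange.eval_basis_self hinj hβ
        simp [hb1]
      · intro γ hγ hne
        have hb0 : eval β (Lagrange.basis S id γ) = 0 :=
          Lagrange.eval_basis_of_ne (v := id) hne hβ
        simp [hb0]
      · intro h; exact absurd hβ h
    rw [map_sub] at hz
    have hz2 := sub_eq_zero.mp hz
    have ha2 : (aeval (mul a) (X^2 : ℝ[X])) E = mul a a := by
      rw [aeval_X_pow, pow_apply_E]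
      show mul a (mul a E) = mul a a
      rw [comm a E, hE]
    calc mul a a = (aeval (mul a) (X^2 : ℝ[X])) E := ha2.symm
      _ = (aeval (mul a) (∑ α ∈ S, C (α^2) * Lagrange.basis S id α)) E := by rw [hz2]
      _ = ∑ α ∈ S, (α^2) • c α := by
          rw [map_sum, LinearMap.sum_apply]
          apply Finset.sum_congr rfl
          intro α _
          rw [map_mul, aeval_C, Module.End.mul_apply]
          simp [hcdef, Module.algebraMap_end_eq_smul_id]
  rw [assoc, hdecomp]
  rw [sum_inner]
  apply Finset.sum_nonneg
  intro α hα
  rw [real_inner_smul_left]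
  apply mul_nonneg (sq_nonneg α)
  have : ⟪c α, mul u u⟫ = ⟪mul (c α) u, u⟫ := (assoc (c α) u u).symm
  rw [this]
  exact symPSD (mul (c α)) (Lsym (c α))
    (fun μ v hv hμ => idem_eig mul comm jordan assoc (c α) (hidem α hα) μ v hv hμ) u

end JordanAux

section Main
variable {V : Type*} [NormedAddCommGroup V] [InnerProductSpace ℝ V] [FiniteDimensional ℝ V]

theorem key_ineq (mul : V →ₗ[ℝ] V →ₗ[ℝ] V)
    (comm : ∀ X Y : V, mul X Y = mul Y X)
    (jordan : ∀ X Y : V, mul X (mul (mul X X) Y) = mul (mul X X) (mul X Y))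
    (E : V) (hE : ∀ X : V, mul E X = X)
    (assoc : ∀ X Y Z : V, ⟪mul X Y, Z⟫ = ⟪X, mul Y Z⟫)
    (X Y : V) : ⟪mul X Y, mul X Y⟫ ≤ ⟪mul X X, mul Y Y⟫ := by
  have Lsym : ∀ w : V, (mul w).IsSymmetric := by
    intro w v z
    rw [comm w v, assoc]
  set T : V →ₗ[ℝ] V := mul (mul Y Y) - (mul Y) ∘ₗ (mul Y) with hT
  have hTapp : ∀ v, T v = mul (mul Y Y) v - mul Y (mul Y v) := fun v => rfl
  have hTsym : T.IsSymmetric := by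
    intro u v
    rw [hTapp, hTapp, inner_sub_left, inner_sub_right, Lsym (mul Y Y) u v]
    have : ⟪mul Y (mul Y u), v⟫ = ⟪u, mul Y (mul Y v)⟫ := by
      rw [Lsym Y (mul Y u) v, Lsym Y u (mul Y v)]
    rw [this]
  -- all eigenvalues of T are nonnegative
  have heig : ∀ (μ : ℝ) (v : V), v ≠ 0 → T v = μ • v → 0 ≤ μ := by
    intro μ v hv hTv
    set K : Submodule ℝ V := Module.End.eigenspace (T : Module.End ℝ V) μ with hK
    have hvK : v ∈ K := Module.End.mem_eigenspace_iff.mpr hTv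
    have hKinv : ∀ w ∈ K, mul Y w ∈ K := by
      intro w hw
      have hw' : T w = μ • w := Module.End.mem_eigenspace_iff.mp hw
      apply Module.End.mem_eigenspace_iff.mpr
      show T (mul Y w) = μ • mul Y w
      have hcomm : T (mul Y w) = mul Y (T w) := by
        rw [hTapp, hTapp, map_sub]
        congr 1
        exact (jordan Y w).symm
      rw [hcomm, hw', map_smul]
    haveI : Nontrivial K := nontrivial_of_ne (⟨v, hvK⟩ : K) 0 (by
      intro h0
      apply hv
      simpa using congrArg Subtype.val h0)
    have hpos : 0 < Module.finrank ℝ K := Module.finrank_pos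
    set Rr : K →ₗ[ℝ] K := (mul Y).restrict hKinv with hRr
    have hRrsym : Rr.IsSymmetric := by
      intro u w
      have : (Rr u : V) = mul Y (u : V) := rfl
      rw [Submodule.coe_inner, Submodule.coe_inner, this]
      show ⟪mul Y (u:V), (w:V)⟫ = ⟪(u:V), mul Y (w:V)⟫
      exact Lsym Y (u:V) (w:V)
    set i0 : Fin (Module.finrank ℝ K) := ⟨0, hpos⟩ with hi0
    set e : K := hRrsym.eigenvectorBasis rfl i0 with he
    set α : ℝ := hRrsym.eigenvalues rfl i0 with hα
    have heeig : Rr e = α • e := hRrsym.apply_eigenvectorBasis rfl i0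
    have hene : e ≠ 0 := (hRrsym.eigenvectorBasis rfl).orthonormal.ne_zero i0
    set w : V := (e : V) with hw
    have hwne : w ≠ 0 := by
      intro h0
      exact hene (Subtype.ext h0)
    have hYw : mul Y w = α • w := by
      have := congrArg (Subtype.val : K → V) heeig
      exact this
    have hTw : T w = μ • w := Module.End.mem_eigenspace_iff.mp e.2
    have hY2w : mul (mul Y Y) w = (μ + α^2) • w := by
      have := hTw
      rw [hTapp, hYw, map_smul, hYw, smul_smul] at this
      have h2 : mul (mul Y Y) w = μ • w + (α * α) • w := by
        rw [← this]; abel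
      rw [h2, ← add_smul]
      ring_nf
    have hr : (0:ℝ) < ⟪w, w⟫ := by
      rw [real_inner_self_eq_norm_sq]
      exact pow_pos (norm_pos_iff.mpr hwne) 2
    -- apply positivity of squares to z = Y - α • E
    have hz := PSDsq mul comm jordan E hE assoc (Y - α • E) w
    have hzz : mul (Y - α • E) (Y - α • E) = mul Y Y - (2*α) • Y + (α^2) • E := by
      have hYE : mul Y E = Y := by rw [comm Y E, hE]
      have hEY : mul E Y = Y := hE Y
      have hEE : mul E E = E := hE E
      simp only [map_sub, map_smul, LinearMap.sub_apply, LinearMap.smul_apply, hYE, hEY, hEE]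
      module
    rw [hzz] at hz
    have expand : ⟪mul (mul Y Y - (2*α) • Y + (α^2) • E) w, w⟫ = μ * ⟪w, w⟫ := by
      simp only [map_add, map_sub, map_smul, LinearMap.add_apply, LinearMap.sub_apply,
        LinearMap.smul_apply, inner_add_left, inner_sub_left, real_inner_smul_left]
      rw [hY2w, hYw, hE w, real_inner_smul_left, real_inner_smul_left]
      ring
    rw [expand] at hz
    exact le_of_not_gt fun hlt => absurd hz (not_le.mpr (mul_neg_of_neg_of_pos hlt hr))
  -- conclude
  have hpsd := symPSD T hTsym heig X
  rw [hTapp, inner_sub_left] at hpsd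
  have t2 : ⟪mul Y (mul Y X), X⟫ = ⟪mul X Y, mul X Y⟫ := by
    rw [Lsym Y (mul Y X) X, comm Y X, real_inner_comm]
  have t1 : ⟪mul (mul Y Y) X, X⟫ = ⟪mul X X, mul Y Y⟫ := by
    rw [assoc (mul Y Y) X X, real_inner_comm]
  rw [t1, t2] at hpsd
  linarith
end Main

/-- A formally real Jordan algebra with associative inner product
has non-positive Jordan curvature. -/
theorem formally_real_nonpos_curvature
    {V : Type*} [NormedAddCommGroup V] [InnerProductSpace ℝ V] [FiniteDimensional ℝ V]
    (mul : V →ₗ[ℝ] V →ₗ[ℝ] V)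
    (comm : ∀ X Y : V, mul X Y = mul Y X)
    (jordan : ∀ X Y : V, mul X (mul (mul X X) Y) = mul (mul X X) (mul X Y))
    (E : V) (hE : ∀ X : V, mul E X = X)
    (formallyReal : ∀ X Y : V, mul X X + mul Y Y = 0 → X = 0 ∧ Y = 0)
    (assoc : ∀ X Y Z : V, ⟪mul X Y, Z⟫ = ⟪X, mul Y Z⟫)
    (D : V → V → V) (hD : ∀ X Y : V, D X Y = (1/2 : ℝ) • mul X Y)
    (R : V → V → V → V)
    (hR : ∀ X Y Z : V, R X Y Z = D (mul X Y) Z - D X (D Y Z) - D Y (D X Z)) :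
    ∀ X Y : V, LinearIndependent ℝ ![X, Y] → ⟪R X Y X, Y⟫ ≤ 0 := by
  intro X Y _
  have Lsym : ∀ w : V, (mul w).IsSymmetric := by
    intro w v z
    rw [comm w v, assoc]
  have hform : R X Y X = (1/2 : ℝ) • mul (mul X Y) X - (1/4 : ℝ) • mul X (mul Y X)
      - (1/4 : ℝ) • mul Y (mul X X) := by
    rw [hR, hD, hD, hD, hD, hD]
    simp only [map_smul]
    module
  rw [hform]
  rw [inner_sub_left, inner_sub_left, real_inner_smul_left, real_inner_smul_left,
    real_inner_smul_left]
  have t1 : ⟪mul (mul X Y) X, Y⟫ = ⟪mul X Y, mul X Y⟫ := assoc (mul X Y) X Y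
  have t2 : ⟪mul X (mul Y X), Y⟫ = ⟪mul X Y, mul X Y⟫ := by
    rw [comm Y X, Lsym X (mul X Y) Y]
  have t3 : ⟪mul Y (mul X X), Y⟫ = ⟪mul X X, mul Y Y⟫ := by
    rw [comm Y (mul X X), assoc (mul X X) Y Y]
  rw [t1, t2, t3]
  have hk := key_ineq mul comm jordan E hE assoc X Y
  linarith
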